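/- Let P be an (m+1)-term complex of finitely generated projective A-modules. For any X ∈ m-mod A there are functorial isomorphisms Hom(P,X[j]) ≅ Hom(H^{[-(m-1),0]}(P),X[j]) for all integers j≤0, and a monomorphism Hom(H^{[-(m-1),0]}(P),X[1]) ↪ Hom(P,X[1]). -/

import Mathlib

open CategoryTheory Limits Pretriangulated Triangulated

variable {k : Type*} [Field k]
variable {D : Type*} [Category D] [Preadditive D] [CategoryTheory.Linear k D]
  [HasZeroObject D] [HasShift D ℤ] [∀ n : ℤ, (shiftFunctor D n).Additive]
  [Pretriangulated D] [HasFiniteBiproducts D]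

/-- `star S T` consists of the objects `Z` admitting a distinguished triangle
`X → Z → Y → X⟦1⟧` with `X ∈ S` and `Y ∈ T`. -/
def star (S T : Set D) : Set D :=
  {Z | ∃ (X Y : D) (f : X ⟶ Z) (g : Z ⟶ Y) (h : Y ⟶ X⟦(1 : ℤ)⟧),
    (Triangle.mk f g h ∈ distTriang D) ∧ X ∈ S ∧ Y ∈ T}

/-- `addHull M` is the additive hull `add M` of `M`: all direct summands of
finite direct sums of copies of `M`. -/
def addHull (M : D) : Set D :=
  {X | ∃ (n : ℕ) (i : X ⟶ ⨁ fun _ : Fin n => M) (r : (⨁ fun _ : Fin n => M) ⟶ X),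
    i ≫ r = 𝟙 X}

/-- `X` is a projective object of the extension-closed subcategory `E`,
i.e. `X ∈ E` and `Hom(X, Y⟦1⟧) = 0` for all `Y ∈ E`. -/
def ProjIn (E : Set D) (X : D) : Prop :=
  X ∈ E ∧ ∀ Y ∈ E, ∀ f : X ⟶ Y⟦(1 : ℤ)⟧, f = 0

/-- `X` is an injective object of the extension-closed subcategory `E`,
i.e. `X ∈ E` and `Hom(Y, X⟦1⟧) = 0` for all `Y ∈ E`. -/
def InjIn (E : Set D) (X : D) : Prop :=
  X ∈ E ∧ ∀ Y ∈ E, ∀ f : Y ⟶ X⟦(1 : ℤ)⟧, f = 0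

/-- An axiomatization of the bounded derived category `D = D^b(mod A)` of a
finite-dimensional algebra `A` over the field `k`, recording:

* the canonical (bounded) t-structure `t`, with truncation functions
  `trLE n = σ^{≤ n}` and `trGE n = σ^{≥ n}` (characterized by the usual
  truncation triangles);
* the classes `projC a b` (resp. `injC a b`) of objects isomorphic in
  `D^b(mod A)` to a complex of finitely generated projective (resp. injective)
  modules concentrated in cohomological degrees `[a, b]`, together with the
  basic properties of such complexes (cohomological amplitude, vanishing of
  maps to sufficiently negative (resp. from sufficiently positive) objects,
  behaviour under shifts, direct sums and summands);
* the object `AA` corresponding to the free module `A`, which additively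
  generates `projC 0 0 = proj A`, and `nakF AA = νA = DA` generating
  `injC 0 0 = inj A`;
* the Nakayama functor, recorded through its value function `nakF` on objects
  of `K^b(proj A)` (with quasi-inverse value function `nakInvF`), together
  with the Nakayama duality `Hom(X, Y) ≅ D Hom(Y, νX)`, `D = Hom_k(-, k)`,
  natural in `Y`;
* the minimal projective presentation function `pm m`, where `pm m Z` is the
  stupid truncation `σ_{≥ -m}` of a minimal projective resolution of
  `Z ∈ m-mod A` (an object of `K^{[-m,0]}(proj A)` with
  `H^{[-(m-1),0]}(pm m Z) ≅ Z` having no direct summand of the form `Q⟦m⟧`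
  with `Q ∈ proj A`), and dually the minimal injective presentation
  function `im m`. -/
structure ExtModSetting (k : Type*) [Field k] (D : Type*) [Category D]
    [Preadditive D] [CategoryTheory.Linear k D] [HasZeroObject D] [HasShift D ℤ]
    [∀ n : ℤ, (shiftFunctor D n).Additive] [Pretriangulated D]
    [HasFiniteBiproducts D] : Type _ where
  t : TStructure D
  bounded : ∀ X : D, ∃ a b : ℤ, t.ge a X ∧ t.le b X
  homFinite : ∀ X Y : D, FiniteDimensional k (X ⟶ Y)
  trLE : ℤ → D → D
  trLE_le : ∀ (n : ℤ) (X : D), t.le n (trLE n X)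
  trLE_triangle : ∀ (n : ℤ) (X : D), ∃ (W : D) (f : trLE n X ⟶ X) (g : X ⟶ W)
    (h : W ⟶ (trLE n X)⟦(1 : ℤ)⟧),
    (Triangle.mk f g h ∈ distTriang D) ∧ t.ge (n + 1) W
  trGE : ℤ → D → D
  trGE_ge : ∀ (n : ℤ) (X : D), t.ge n (trGE n X)
  trGE_triangle : ∀ (n : ℤ) (X : D), ∃ (W : D) (f : W ⟶ X) (g : X ⟶ trGE n X)
    (h : trGE n X ⟶ W⟦(1 : ℤ)⟧),
    (Triangle.mk f g h ∈ distTriang D) ∧ t.le (n - 1) W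
  projC : ℤ → ℤ → Set D
  injC : ℤ → ℤ → Set D
  projC_iso : ∀ (a b : ℤ) (X Y : D), X ∈ projC a b → (X ≅ Y) → Y ∈ projC a b
  injC_iso : ∀ (a b : ℤ) (X Y : D), X ∈ injC a b → (X ≅ Y) → Y ∈ injC a b
  projC_mono : ∀ a a' b b' : ℤ, a' ≤ a → b ≤ b' → projC a b ⊆ projC a' b'
  injC_mono : ∀ a a' b b' : ℤ, a' ≤ a → b ≤ b' → injC a b ⊆ injC a' b'
  projC_amp : ∀ (a b : ℤ) (X : D), X ∈ projC a b → t.ge a X ∧ t.le b X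
  injC_amp : ∀ (a b : ℤ) (X : D), X ∈ injC a b → t.ge a X ∧ t.le b X
  projC_shift : ∀ (a b n : ℤ) (X : D), X ∈ projC a b → X⟦n⟧ ∈ projC (a - n) (b - n)
  injC_shift : ∀ (a b n : ℤ) (X : D), X ∈ injC a b → X⟦n⟧ ∈ injC (a - n) (b - n)
  projC_sum : ∀ (a b : ℤ) (X Y : D), X ∈ projC a b → Y ∈ projC a b → (X ⊞ Y) ∈ projC a b
  injC_sum : ∀ (a b : ℤ) (X Y : D), X ∈ injC a b → Y ∈ injC a b → (X ⊞ Y) ∈ injC a b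
  projC_summand : ∀ (a b : ℤ) (X Y : D), Y ∈ projC a b →
    (∃ (i : X ⟶ Y) (r : Y ⟶ X), i ≫ r = 𝟙 X) → X ∈ projC a b
  injC_summand : ∀ (a b : ℤ) (X Y : D), Y ∈ injC a b →
    (∃ (i : X ⟶ Y) (r : Y ⟶ X), i ≫ r = 𝟙 X) → X ∈ injC a b
  projC_vanish : ∀ (a b : ℤ) (X Y : D), X ∈ projC a b → t.le (a - 1) Y →
    ∀ f : X ⟶ Y, f = 0
  injC_vanish : ∀ (a b : ℤ) (X Y : D), Y ∈ injC a b → t.ge (b + 1) X →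
    ∀ f : X ⟶ Y, f = 0
  AA : D
  AA_mem : AA ∈ projC 0 0
  projC_zero_zero : ∀ X : D, X ∈ projC 0 0 ↔ X ∈ addHull AA
  nakF : D → D
  nakF_mem : ∀ (a b : ℤ) (X : D), X ∈ projC a b → nakF X ∈ injC a b
  injC_zero_zero : ∀ X : D, X ∈ injC 0 0 ↔ X ∈ addHull (nakF AA)
  nakInvF : D → D
  nakInvF_mem : ∀ (a b : ℤ) (Y : D), Y ∈ injC a b → nakInvF Y ∈ projC a b
  nakF_nakInvF : ∀ (a b : ℤ) (Y : D), Y ∈ injC a b → Nonempty (nakF (nakInvF Y) ≅ Y)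
  nakDuality : ∀ X : D, (∃ a b : ℤ, X ∈ projC a b) →
    ∃ e : ∀ Y : D, (X ⟶ Y) ≃ₗ[k] Module.Dual k (Y ⟶ nakF X),
      ∀ (Y Y' : D) (v : Y ⟶ Y') (u : X ⟶ Y) (g : Y' ⟶ nakF X),
        e Y' (u ≫ v) g = e Y u (v ≫ g)
  pm : ℤ → D → D
  pm_mem : ∀ (m : ℤ) (Z : D), 1 ≤ m → t.le 0 Z → t.ge (1 - m) Z →
    pm m Z ∈ projC (-m) 0
  pm_triangle : ∀ (m : ℤ) (Z : D), 1 ≤ m → t.le 0 Z → t.ge (1 - m) Z →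
    ∃ (W : D) (f : W ⟶ pm m Z) (g : pm m Z ⟶ Z) (h : Z ⟶ W⟦(1 : ℤ)⟧),
      (Triangle.mk f g h ∈ distTriang D) ∧ t.le (-m) W ∧ t.ge (-m) W
  pm_minimal : ∀ (m : ℤ) (Z : D), 1 ≤ m → t.le 0 Z → t.ge (1 - m) Z →
    ∀ Q : D, Q ∈ projC 0 0 →
      (∃ (i : Q⟦m⟧ ⟶ pm m Z) (r : pm m Z ⟶ Q⟦m⟧), i ≫ r = 𝟙 (Q⟦m⟧)) → IsZero Q
  im : ℤ → D → D
  im_mem : ∀ (m : ℤ) (Z : D), 1 ≤ m → t.le 0 Z → t.ge (1 - m) Z →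
    im m Z ∈ injC (1 - m) 1
  im_triangle : ∀ (m : ℤ) (Z : D), 1 ≤ m → t.le 0 Z → t.ge (1 - m) Z →
    ∃ (f : Z ⟶ im m Z) (W : D) (g : im m Z ⟶ W) (h : W ⟶ Z⟦(1 : ℤ)⟧),
      (Triangle.mk f g h ∈ distTriang D) ∧ t.le 1 W ∧ t.ge 1 W
  im_minimal : ∀ (m : ℤ) (Z : D), 1 ≤ m → t.le 0 Z → t.ge (1 - m) Z →
    ∀ I : D, I ∈ injC 0 0 →
      (∃ (i : I⟦(-1 : ℤ)⟧ ⟶ im m Z) (r : im m Z ⟶ I⟦(-1 : ℤ)⟧),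
        i ≫ r = 𝟙 (I⟦(-1 : ℤ)⟧)) → IsZero I

namespace ExtModSetting

variable (S : ExtModSetting k D)

/-- The `m`-extended module category
`m-mod A = {X ∈ D^b(mod A) | Hᵢ(X) = 0 for i ∉ [-(m-1), 0]}`. -/
def emod (m : ℕ) : Set D := {X | S.t.le 0 X ∧ S.t.ge (1 - (m : ℤ)) X}

/-- The truncation `H^{[p,q]} = σ^{≥ p} ∘ σ^{≤ q}`. -/
def hTr (p q : ℤ) (X : D) : D := S.trGE p (S.trLE q X)

/-- `Fac S m 𝒳 n` is the class of `n`-factors of `𝒳` inside `m-mod A`. -/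
def Fac (m : ℕ) (𝒳 : Set D) : ℕ → Set D
  | 0 => S.emod m
  | n + 1 =>
    {Z | Z ∈ S.emod m ∧ ∃ (Z₁ X₁ : D) (f : Z₁ ⟶ X₁) (g : X₁ ⟶ Z) (h : Z ⟶ Z₁⟦(1 : ℤ)⟧),
      (Triangle.mk f g h ∈ distTriang D) ∧ X₁ ∈ 𝒳 ∧ Z₁ ∈ Fac m 𝒳 n}

/-- `SubObj S m 𝒳 n` is the class of `n`-subobjects of `𝒳` inside `m-mod A`. -/
def SubObj (m : ℕ) (𝒳 : Set D) : ℕ → Set D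
  | 0 => S.emod m
  | n + 1 =>
    {Z | Z ∈ S.emod m ∧ ∃ (X₁ Z₁ : D) (f : Z ⟶ X₁) (g : X₁ ⟶ Z₁) (h : Z₁ ⟶ Z⟦(1 : ℤ)⟧),
      (Triangle.mk f g h ∈ distTriang D) ∧ X₁ ∈ 𝒳 ∧ Z₁ ∈ SubObj m 𝒳 n}

/-- `T(P) = {X ∈ m-mod A | Hom(P, X[j]) = 0 for all j ≥ 1}`. -/
def TP (m : ℕ) (P : D) : Set D :=
  {X | X ∈ S.emod m ∧ ∀ j : ℤ, 1 ≤ j → ∀ f : P ⟶ X⟦j⟧, f = 0}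

/-- `F(P) = {X ∈ m-mod A | Hom(P, X[j]) = 0 for all j ≤ 0}`. -/
def FP (m : ℕ) (P : D) : Set D :=
  {X | X ∈ S.emod m ∧ ∀ j : ℤ, j ≤ 0 → ∀ f : P ⟶ X⟦j⟧, f = 0}

/-- A complex is presilting if `Hom(P, P[j]) = 0` for all `j > 0`. -/
def Presilting (P : D) : Prop := ∀ j : ℤ, 0 < j → ∀ f : P ⟶ P⟦j⟧, f = 0

/-- The objects of `K^b(proj A)`. -/
def Kb : Set D := {X | ∃ a b : ℤ, X ∈ S.projC a b}

/-- A thick subcategory: closed under isomorphisms, shifts, extensions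
(hence cones) and direct summands. -/
def IsThickSub (T : Set D) : Prop :=
  (∀ X Y : D, X ∈ T → (X ≅ Y) → Y ∈ T) ∧
  (∀ (X : D) (n : ℤ), X ∈ T → X⟦n⟧ ∈ T) ∧
  (∀ (X Y Z : D) (f : X ⟶ Y) (g : Y ⟶ Z) (h : Z ⟶ X⟦(1 : ℤ)⟧),
    (Triangle.mk f g h ∈ distTriang D) → X ∈ T → Z ∈ T → Y ∈ T) ∧
  (∀ X Y : D, Y ∈ T → (∃ (i : X ⟶ Y) (r : Y ⟶ X), i ≫ r = 𝟙 X) → X ∈ T)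

/-- A presilting complex is silting if the smallest thick subcategory
containing it is all of `K^b(proj A)`. -/
def Silting (P : D) : Prop :=
  Presilting P ∧ ∀ T : Set D, IsThickSub T → P ∈ T → S.Kb ⊆ T

/-- A torsion pair in `m-mod A`. -/
structure IsTorsionPair (m : ℕ) (T F : Set D) : Prop where
  subsetT : T ⊆ S.emod m
  subsetF : F ⊆ S.emod m
  hom_zero : ∀ X ∈ T, ∀ Y ∈ F, ∀ f : X ⟶ Y, f = 0
  heart_eq : S.emod m = star T F

/-- An s-torsion pair in `m-mod A`. -/
structure IsSTorsionPair (m : ℕ) (T F : Set D)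
    extends S.IsTorsionPair m T F : Prop where
  hom_neg_one_zero : ∀ X ∈ T, ∀ Y ∈ F, ∀ f : X ⟶ Y⟦(-1 : ℤ)⟧, f = 0

/-- The Auslander-Reiten translation
`τ_[m](Z) = σ^{≤ 0}(ν p_m(Z)[-1])` of `m-mod A`. -/
def tau (m : ℕ) (Z : D) : D := S.trLE 0 ((S.nakF (S.pm (m : ℤ) Z))⟦(-1 : ℤ)⟧)

/-- The inverse Auslander-Reiten translation
`τ_[m]⁻(Z) = σ^{≥ -(m-1)}(ν⁻ i_m(Z)[1])` of `m-mod A`. -/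
def tauInv (m : ℕ) (Z : D) : D := S.trGE (1 - (m : ℤ)) ((S.nakInvF (S.im (m : ℤ) Z))⟦(1 : ℤ)⟧)

end ExtModSetting

/-!
Statement 7. Let `P` be an `(m+1)`-term complex of finitely generated projective
`A`-modules, i.e. `P ∈ K^b(proj A)` with `Pⁱ = 0` for `i ∉ [-m, 0]`.  For any
`X ∈ m-mod A` there are functorial isomorphisms
`Hom(P, X[j]) ≅ Hom(H^{[-(m-1),0]}(P), X[j])` for all `j ≤ 0`, and a
monomorphism `Hom(H^{[-(m-1),0]}(P), X[1]) ↪ Hom(P, X[1])`; both are induced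
by composition with the canonical map `g : P ⟶ H^{[-(m-1),0]}(P)` from the
truncation triangle `H^{-m}(P)[m] → P → H^{[-(m-1),0]}(P) → H^{-m}(P)[m+1]`.
-/

section Aux

variable {C : Type*} [Category C] [Preadditive C] [HasZeroObject C] [HasShift C ℤ]
  [∀ n : ℤ, (shiftFunctor C n).Additive] [Pretriangulated C]

lemma tstructure_zero (t : TStructure C) {X Y : C} (f : X ⟶ Y) (n₀ n₁ : ℤ)
    (hn : n₀ < n₁) (hX : t.le n₀ X) (hY : t.ge n₁ Y) : f = 0 := by
  have hX' : t.le 0 (X⟦n₀⟧) := t.le_shift n₀ n₀ 0 (add_zero _) X hX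
  have hY' : t.ge (n₁ - n₀) (Y⟦n₀⟧) := t.ge_shift n₁ n₀ (n₁ - n₀) (by omega) Y hY
  have hY'' : t.ge 1 (Y⟦n₀⟧) := t.ge_antitone (show (1:ℤ) ≤ n₁ - n₀ by omega) _ hY'
  have : (shiftFunctor C n₀).map f = 0 := t.zero' _ hX' hY''
  apply (shiftFunctor C n₀).map_injective
  simpa using this

end Aux

theorem stmt7 (S : ExtModSetting k D) (m : ℕ) (hm : 0 < m)
    (P : D) (hP : P ∈ S.projC (-(m : ℤ)) 0)
    (W HP : D) (w : W ⟶ P) (g : P ⟶ HP) (h : HP ⟶ W⟦(1 : ℤ)⟧)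
    (hTri : Triangle.mk w g h ∈ distTriang D)
    (hW : S.t.le (-(m : ℤ)) W ∧ S.t.ge (-(m : ℤ)) W)
    (hHP : HP ∈ S.emod m) :
    (∀ j : ℤ, j ≤ 0 → ∀ X ∈ S.emod m,
      Function.Bijective fun u : HP ⟶ X⟦j⟧ => g ≫ u) ∧
    (∀ X ∈ S.emod m,
      Function.Injective fun u : HP ⟶ X⟦(1 : ℤ)⟧ => g ≫ u) := by
  obtain ⟨hWle, hWge⟩ := hW
  have hW1le : S.t.le (-(m : ℤ) - 1) (W⟦(1 : ℤ)⟧) :=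
    S.t.le_shift (-(m : ℤ)) 1 (-(m : ℤ) - 1) (by omega) W hWle
  constructor
  · intro j hj X hX
    have hXj : S.t.ge (1 - (m : ℤ) - j) (X⟦j⟧) :=
      S.t.ge_shift (1 - (m : ℤ)) j (1 - (m : ℤ) - j) (by omega) X hX.2
    constructor
    · intro u₁ u₂ huv
      have h0 : g ≫ (u₁ - u₂) = 0 := by
        simp only [Preadditive.comp_sub]
        rw [show g ≫ u₁ = g ≫ u₂ from huv, sub_self]
      obtain ⟨v, hv⟩ := Triangle.yoneda_exact₃ _ hTri (u₁ - u₂) h0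
      have hv0 : v = 0 := tstructure_zero S.t v (-(m : ℤ) - 1) (1 - (m : ℤ) - j)
        (by omega) hW1le hXj
      have : u₁ - u₂ = 0 := by rw [hv, hv0, comp_zero]; rfl
      exact sub_eq_zero.mp this
    · intro f
      have hwf : w ≫ f = 0 := tstructure_zero S.t (w ≫ f) (-(m : ℤ)) (1 - (m : ℤ) - j)
        (by omega) hWle hXj
      obtain ⟨u, hu⟩ := Triangle.yoneda_exact₂ _ hTri f hwf
      exact ⟨u, hu.symm⟩
  · intro X hX u₁ u₂ huv
    have hXj : S.t.ge (1 - (m : ℤ) - 1) (X⟦(1 : ℤ)⟧) :=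
      S.t.ge_shift (1 - (m : ℤ)) 1 (1 - (m : ℤ) - 1) (by omega) X hX.2
    have h0 : g ≫ (u₁ - u₂) = 0 := by
      simp only [Preadditive.comp_sub]
      rw [show g ≫ u₁ = g ≫ u₂ from huv, sub_self]
    obtain ⟨v, hv⟩ := Triangle.yoneda_exact₃ _ hTri (u₁ - u₂) h0
    have hv0 : v = 0 := tstructure_zero S.t v (-(m : ℤ) - 1) (1 - (m : ℤ) - 1)
      (by omega) hW1le hXj
    have : u₁ - u₂ = 0 := by rw [hv, hv0, comp_zero]; rfl
    exact sub_eq_zero.mp this
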